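/- Let k be a positive integer, 0 < α < 1, ε₀ > 0, and let R : ℝ × ℝ × [0, ε₀] → ℝ be continuous and 2π-periodic in its first variable. Define F : ℝ × ℝ × [0, ε₀] → ℝ by F(θ, r, ε) = Σ_{i=1}^{k−1} ε^{i−1} r^{i+1} cos^{i−1}(θ) sin(θ) + ε^{k−1} r (rᵏ cos^{k−1}(θ) + ∛(r² − 1) sin(θ)) sin(θ) + εᵏ R(θ, r, ε), where ∛ denotes the real cube root. Then there exists ε₁ ∈ (0, ε₀] such that for every λ ∈ (0, 1] and ε ∈ (0, ε₁], every 2π-periodic continuously differentiable function r : ℝ → ℝ satisfying r'(θ) = ε λ F(θ, r(θ), ε) and r(θ) ∈ [1 − α, 1 + α] for all θ, in fact satisfies r(θ) ∈ (1 − α, 1 + α) for all θ. -/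

import Mathlib

open Real

lemma cube_le_cube {a b : ℝ} (h : a^3 ≤ b^3) : a ≤ b := by
  by_contra hc
  push_neg at hc
  have : b^3 < a^3 := by nlinarith [sq_nonneg (a+b), sq_nonneg (a-b), sq_nonneg a, sq_nonneg b, mul_pos (sub_pos.mpr hc) (sub_pos.mpr hc)]
  linarith

lemma cbrt_cont (cbrt : ℝ → ℝ) (hcbrt : ∀ u, (cbrt u) ^ 3 = u) : Continuous cbrt := by
  have hsm : StrictMono cbrt := by
    intro a b hab
    by_contra hc
    push_neg at hc
    have h3 : (cbrt b)^3 ≤ (cbrt a)^3 := by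
      nlinarith [sq_nonneg (cbrt a + cbrt b), sq_nonneg (cbrt a - cbrt b), sq_nonneg (cbrt a), sq_nonneg (cbrt b)]
    rw [hcbrt, hcbrt] at h3
    exact absurd h3 (not_le.mpr hab)
  have hsurj : Function.Surjective cbrt := by
    intro u
    refine ⟨u^3, ?_⟩
    have h1 : (cbrt (u^3))^3 = u^3 := hcbrt _
    have := cube_le_cube h1.le
    have := cube_le_cube h1.ge
    linarith
  exact (StrictMono.orderIsoOfSurjective cbrt hsm hsurj).continuous

lemma Fexp (m : ℕ) (cbrt : ℝ → ℝ) (R F : ℝ → ℝ → ℝ → ℝ)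
    (hF' : ∀ θ x e, F θ x e =
      (∑ i ∈ Finset.Icc 1 m, e ^ (i - 1) * x ^ (i + 1) * Real.cos θ ^ (i - 1) * Real.sin θ)
      + e ^ m * (x * ((x ^ (m+1) * Real.cos θ ^ m
          + cbrt (x ^ 2 - 1) * Real.sin θ) * Real.sin θ))
      + e ^ (m+1) * R θ x e)
    (a b : ℕ) (θ x e : ℝ) :
    Real.cos θ ^ a * x ^ b * F θ x e
    = (∑ i ∈ Finset.Icc 1 m, e ^ (i - 1) * (Real.cos θ ^ (a+i-1) * Real.sin θ * x ^ (b+i+1)))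
      + e ^ m * (Real.cos θ ^ (a+m) * Real.sin θ * x ^ (b+m+2))
      + e ^ m * (x ^ (b+1) * cbrt (x ^ 2 - 1) * (Real.sin θ * Real.sin θ * Real.cos θ ^ a))
      + e ^ (m+1) * (Real.cos θ ^ a * x ^ b * R θ x e) := by
  rw [hF', mul_add, mul_add, Finset.mul_sum]
  have hs : ∀ i ∈ Finset.Icc 1 m,
      Real.cos θ ^ a * x ^ b * (e ^ (i - 1) * x ^ (i + 1) * Real.cos θ ^ (i - 1) * Real.sin θ)
      = e ^ (i - 1) * (Real.cos θ ^ (a+i-1) * Real.sin θ * x ^ (b+i+1)) := by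
    intro i hi
    have h1 : 1 ≤ i := (Finset.mem_Icc.mp hi).1
    obtain ⟨j, rfl⟩ : ∃ j, i = j + 1 := ⟨i - 1, by omega⟩
    have e1 : a + (j+1) - 1 = a + j := by omega
    have e2 : (j+1) - 1 = j := by omega
    have e3 : b + (j+1) + 1 = b + (j + 2) := by omega
    rw [e1, e2, e3, pow_add, pow_add, pow_add]
    ring
  rw [Finset.sum_congr rfl hs]
  have hm : Real.cos θ ^ a * x ^ b * (e ^ m * (x * ((x ^ (m+1) * Real.cos θ ^ m
          + cbrt (x ^ 2 - 1) * Real.sin θ) * Real.sin θ)))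
      = e ^ m * (Real.cos θ ^ (a+m) * Real.sin θ * x ^ (b+m+2))
      + e ^ m * (x ^ (b+1) * cbrt (x ^ 2 - 1) * (Real.sin θ * Real.sin θ * Real.cos θ ^ a)) := by
    have e3 : b + m + 2 = b + (m+1) + 1 := by omega
    rw [e3, pow_add, pow_add, pow_add, pow_add]
    ring
  rw [hm]
  ring

lemma intT_zero (p : ℕ) : ∫ θ in (0:ℝ)..(2*π), cos θ ^ p * sin θ = 0 := by
  have hd : ∀ θ : ℝ, HasDerivAt (fun t => -(cos t ^ (p+1)) / ((p:ℝ)+1)) (cos θ ^ p * sin θ) θ := by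
    intro θ
    have h1 := (Real.hasDerivAt_cos θ).pow (p+1)
    have h2 := (h1.neg).div_const ((p:ℝ)+1)
    have h2' : HasDerivAt (fun t => -(cos t ^ (p+1)) / ((p:ℝ)+1)) _ θ := h2
    convert h2' using 1
    simp only [Nat.add_sub_cancel]
    push_cast
    field_simp
  have hi : IntervalIntegrable (fun θ => cos θ ^ p * sin θ) MeasureTheory.volume 0 (2*π) :=
    (by fun_prop : Continuous fun θ : ℝ => cos θ ^ p * sin θ).intervalIntegrable _ _
  rw [intervalIntegral.integral_eq_sub_of_hasDerivAt (fun θ _ => hd θ) hi]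
  simp

lemma IBP (r G : ℝ → ℝ) (hper : Function.Periodic r (2*π))
    (hd : ∀ θ, HasDerivAt r (G θ) θ) (hGc : Continuous G) (p q : ℕ) :
    ((p:ℝ)+1) * ∫ θ in (0:ℝ)..(2*π), cos θ ^ p * sin θ * r θ ^ (q+1)
    = ((q:ℝ)+1) * ∫ θ in (0:ℝ)..(2*π), cos θ ^ (p+1) * r θ ^ q * G θ := by
  have hrc : Continuous r := by
    rw [continuous_iff_continuousAt]; exact fun θ => (hd θ).differentiableAt.continuousAt
  set f1 : ℝ → ℝ := fun θ => cos θ ^ p * sin θ * r θ ^ (q+1) with hf1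
  set f2 : ℝ → ℝ := fun θ => cos θ ^ (p+1) * r θ ^ q * G θ with hf2
  have hder : ∀ θ : ℝ, HasDerivAt (fun t => cos t ^ (p+1) * r t ^ (q+1))
      (-(((p:ℝ)+1) * f1 θ) + ((q:ℝ)+1) * f2 θ) θ := by
    intro θ
    have h1 := (Real.hasDerivAt_cos θ).pow (p+1)
    have h2 := (hd θ).pow (q+1)
    have h3 := h1.mul h2
    have h3' : HasDerivAt (fun t => cos t ^ (p+1) * r t ^ (q+1)) _ θ := h3
    convert h3' using 1
    simp only [Nat.add_sub_cancel, hf1, hf2, Pi.pow_apply]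
    push_cast
    ring
  have hint : IntervalIntegrable (fun θ => -(((p:ℝ)+1) * f1 θ) + ((q:ℝ)+1) * f2 θ)
      MeasureTheory.volume 0 (2*π) := by
    apply Continuous.intervalIntegrable
    fun_prop
  have h0 : ∫ θ in (0:ℝ)..(2*π), (-(((p:ℝ)+1) * f1 θ) + ((q:ℝ)+1) * f2 θ) = 0 := by
    rw [intervalIntegral.integral_eq_sub_of_hasDerivAt (fun θ _ => hder θ) hint]
    have hr0 : r (2*π) = r 0 := by simpa using hper 0
    simp [hr0]
  rw [intervalIntegral.integral_add (by apply Continuous.intervalIntegrable; fun_prop)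
      (by apply Continuous.intervalIntegrable; fun_prop)] at h0
  rw [intervalIntegral.integral_neg, intervalIntegral.integral_const_mul,
      intervalIntegral.integral_const_mul] at h0
  linarith

set_option maxHeartbeats 2000000 in
theorem stmt_12 (k : ℕ) (hk : 1 ≤ k) (α : ℝ) (hα0 : 0 < α) (hα1 : α < 1)
    (ε₀ : ℝ) (hε₀ : 0 < ε₀)
    (R : ℝ → ℝ → ℝ → ℝ)
    (hRcont : ContinuousOn (fun p : ℝ × ℝ × ℝ => R p.1 p.2.1 p.2.2)
      (Set.univ ×ˢ Set.univ ×ˢ Set.Icc 0 ε₀))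
    (hRper : ∀ θ r ε, R (θ + 2 * Real.pi) r ε = R θ r ε)
    (cbrt : ℝ → ℝ) (hcbrt : ∀ u, (cbrt u) ^ 3 = u)
    (F : ℝ → ℝ → ℝ → ℝ)
    (hF : ∀ θ r ε, F θ r ε =
      (∑ i ∈ Finset.Icc 1 (k - 1),
        ε ^ (i - 1) * r ^ (i + 1) * Real.cos θ ^ (i - 1) * Real.sin θ)
      + ε ^ (k - 1) * (r * ((r ^ k * Real.cos θ ^ (k - 1)
          + cbrt (r ^ 2 - 1) * Real.sin θ) * Real.sin θ))
      + ε ^ k * R θ r ε) :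
    ∃ ε₁ ∈ Set.Ioc 0 ε₀, ∀ l ∈ Set.Ioc (0:ℝ) 1, ∀ ε ∈ Set.Ioc (0:ℝ) ε₁,
      ∀ r : ℝ → ℝ, Function.Periodic r (2 * Real.pi) → ContDiff ℝ 1 r →
        (∀ θ, HasDerivAt r (ε * l * F θ (r θ) ε) θ) →
        (∀ θ, r θ ∈ Set.Icc (1 - α) (1 + α)) →
        ∀ θ, r θ ∈ Set.Ioo (1 - α) (1 + α) := by
  obtain ⟨m, rfl⟩ : ∃ m, k = m + 1 := ⟨k - 1, by omega⟩
  simp only [Nat.add_sub_cancel] at hF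
  have hπ := Real.two_pi_pos
  have hcc := cbrt_cont cbrt hcbrt
  have hcbrt_le : ∀ u v : ℝ, u ≤ v → cbrt u ≤ cbrt v :=
    fun u v h => cube_le_cube (by rw [hcbrt, hcbrt]; exact h)
  have hc8 : cbrt 8 = 2 :=
    le_antisymm (cube_le_cube (by rw [hcbrt]; norm_num)) (cube_le_cube (by rw [hcbrt]; norm_num))
  have hcn8 : cbrt (-8) = -2 :=
    le_antisymm (cube_le_cube (by rw [hcbrt]; norm_num)) (cube_le_cube (by rw [hcbrt]; norm_num))
  have hcbrt2 : ∀ u : ℝ, -8 ≤ u → u ≤ 8 → |cbrt u| ≤ 2 := fun u h1 h2 =>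
    abs_le.mpr ⟨by rw [← hcn8]; exact hcbrt_le _ _ h1, by rw [← hc8]; exact hcbrt_le _ _ h2⟩
  have hcα : 0 < cbrt α := by nlinarith [hcbrt α, sq_nonneg (cbrt α)]
  have hxb : ∀ x : ℝ, x ∈ Set.Icc (1-α) (1+α) → |x| ≤ 2 ∧ |cbrt (x^2 - 1)| ≤ 2 := by
    intro x hx
    obtain ⟨h1, h2⟩ := hx
    have hax : |x| ≤ 2 := by rw [abs_le]; constructor <;> nlinarith
    refine ⟨hax, hcbrt2 _ ?_ ?_⟩ <;> nlinarith [abs_nonneg x, neg_abs_le x, le_abs_self x]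
  -- bound for R on the relevant region
  obtain ⟨MR0, hMR0b⟩ := ((isCompact_Icc (a := (0:ℝ)) (b := 2*π)).prod
      ((isCompact_Icc (a := 1-α) (b := 1+α)).prod
      (isCompact_Icc (a := (0:ℝ)) (b := ε₀)))).exists_bound_of_continuousOn
      (hRcont.mono (fun x hx => ⟨Set.mem_univ _, Set.mem_univ _, hx.2.2⟩))
  set MR := max MR0 0 with hMRdef
  have hMR0 : 0 ≤ MR := le_max_right _ _
  have hMRb : ∀ (θ x e : ℝ), x ∈ Set.Icc (1-α) (1+α) → e ∈ Set.Icc 0 ε₀ → |R θ x e| ≤ MR := by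
    intro θ x e hx he
    have hperR : Function.Periodic (fun t => R t x e) (2*π) := fun t => hRper t x e
    obtain ⟨y, hy, hxy⟩ := hperR.exists_mem_Ico₀ hπ θ
    have hxy' : R θ x e = R y x e := hxy
    rw [hxy']
    have := hMR0b (y, x, e) ⟨⟨hy.1, hy.2.le⟩, hx, he⟩
    rw [Real.norm_eq_abs] at this
    exact le_trans this (le_max_left _ _)
  -- bound for F on the relevant region
  set MF : ℝ := ((m:ℝ)+1) * 2^(m+2) + 2^(m+2) + 4 + MR + 1 with hMFdef
  have hMF0 : 0 < MF := by positivity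
  have hMFb : ∀ (θ x e : ℝ), x ∈ Set.Icc (1-α) (1+α) → 0 ≤ e → e ≤ 1 → e ≤ ε₀ →
      |F θ x e| ≤ MF := by
    intro θ x e hx he0 he1 heε
    obtain ⟨hx2, hg2⟩ := hxb x hx
    have hepow : ∀ j : ℕ, |e ^ j| ≤ 1 := by
      intro j
      rw [abs_pow]
      exact pow_le_one₀ (abs_nonneg _) (abs_le.mpr ⟨by linarith, he1⟩)
    have hcpow : ∀ j : ℕ, |cos θ ^ j| ≤ 1 := by
      intro j
      rw [abs_pow]
      exact pow_le_one₀ (abs_nonneg _) (abs_cos_le_one θ)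
    have hxpow : ∀ j : ℕ, |x ^ j| ≤ 2 ^ j := by
      intro j
      rw [abs_pow]
      exact pow_le_pow_left₀ (abs_nonneg _) hx2 j
    have hsin : |sin θ| ≤ 1 := abs_sin_le_one θ
    rw [hF]
    have hsum : |∑ i ∈ Finset.Icc 1 m, e^(i-1) * x^(i+1) * cos θ^(i-1) * sin θ|
        ≤ ((m:ℝ)) * 2^(m+1) := by
      calc |∑ i ∈ Finset.Icc 1 m, e^(i-1) * x^(i+1) * cos θ^(i-1) * sin θ|
          ≤ ∑ i ∈ Finset.Icc 1 m, |e^(i-1) * x^(i+1) * cos θ^(i-1) * sin θ| :=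
            Finset.abs_sum_le_sum_abs _ _
        _ ≤ ∑ i ∈ Finset.Icc 1 m, (2:ℝ)^(m+1) := by
            apply Finset.sum_le_sum
            intro i hi
            have him : i + 1 ≤ m + 1 := by
              have := (Finset.mem_Icc.mp hi).2; omega
            have h1 : |x ^ (i+1)| ≤ 2^(m+1) :=
              le_trans (hxpow (i+1)) (pow_le_pow_right₀ one_le_two him)
            rw [abs_mul, abs_mul, abs_mul]
            calc |e^(i-1)| * |x^(i+1)| * |cos θ^(i-1)| * |sin θ|
                ≤ 1 * (2:ℝ)^(m+1) * 1 * 1 := by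
                  gcongr <;> first | exact hepow _ | exact h1 | exact hcpow _ | exact hsin
              _ = (2:ℝ)^(m+1) := by ring
        _ = ((Finset.Icc 1 m).card : ℝ) * 2^(m+1) := by rw [Finset.sum_const]; ring
        _ ≤ ((m:ℝ)) * 2^(m+1) := by
            have : (Finset.Icc 1 m).card ≤ m := by simp
            have h2 : (0:ℝ) ≤ 2^(m+1) := by positivity
            exact mul_le_mul_of_nonneg_right (by exact_mod_cast this) h2
    have hmid : |e^m * (x * ((x^(m+1) * cos θ^m + cbrt (x^2-1) * sin θ) * sin θ))|
        ≤ 2 * (2^(m+1) + 2) := by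
      rw [abs_mul, abs_mul, abs_mul]
      have h1 : |x^(m+1) * cos θ^m + cbrt (x^2-1) * sin θ| ≤ 2^(m+1) + 2 := by
        calc |x^(m+1) * cos θ^m + cbrt (x^2-1) * sin θ|
            ≤ |x^(m+1) * cos θ^m| + |cbrt (x^2-1) * sin θ| := abs_add_le _ _
          _ ≤ 2^(m+1) + 2 := by
              rw [abs_mul, abs_mul]
              have := hxpow (m+1)
              have := hcpow m
              nlinarith [abs_nonneg (x^(m+1)), abs_nonneg (cbrt (x^2-1)),
                pow_nonneg (zero_le_two (α := ℝ)) (m+1)]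
      calc |e^m| * (|x| * (|x^(m+1) * cos θ^m + cbrt (x^2-1) * sin θ| * |sin θ|))
          ≤ 1 * (2 * (((2:ℝ)^(m+1) + 2) * 1)) := by
            gcongr <;> first | exact hepow _ | exact hx2 | exact h1 | exact hsin
        _ = 2 * ((2:ℝ)^(m+1) + 2) := by ring
    have hlast : |e^(m+1) * R θ x e| ≤ MR := by
      rw [abs_mul]
      calc |e^(m+1)| * |R θ x e| ≤ 1 * MR := by
            gcongr <;> first | exact hepow _ | exact hMRb θ x e hx ⟨he0, heε⟩
        _ = MR := by ring
    calc |(∑ i ∈ Finset.Icc 1 m, e^(i-1) * x^(i+1) * cos θ^(i-1) * sin θ)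
          + e^m * (x * ((x^(m+1) * cos θ^m + cbrt (x^2-1) * sin θ) * sin θ))
          + e^(m+1) * R θ x e|
        ≤ |(∑ i ∈ Finset.Icc 1 m, e^(i-1) * x^(i+1) * cos θ^(i-1) * sin θ)
          + e^m * (x * ((x^(m+1) * cos θ^m + cbrt (x^2-1) * sin θ) * sin θ))|
          + |e^(m+1) * R θ x e| := abs_add_le _ _
      _ ≤ |∑ i ∈ Finset.Icc 1 m, e^(i-1) * x^(i+1) * cos θ^(i-1) * sin θ|
          + |e^m * (x * ((x^(m+1) * cos θ^m + cbrt (x^2-1) * sin θ) * sin θ))|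
          + |e^(m+1) * R θ x e| := by gcongr; exact abs_add_le _ _
      _ ≤ ((m:ℝ)) * 2^(m+1) + 2 * (2^(m+1) + 2) + MR := by gcongr
      _ ≤ MF := by
          rw [hMFdef]
          have h1 : (2:ℝ)^(m+1) ≤ 2^(m+2) := pow_le_pow_right₀ one_le_two (by omega)
          have h2 : (0:ℝ) ≤ (m:ℝ) := Nat.cast_nonneg m
          nlinarith [pow_nonneg (zero_le_two (α := ℝ)) (m+1)]
  -- continuity facts
  have hcontR : ∀ (r : ℝ → ℝ), Continuous r → ∀ e : ℝ, 0 ≤ e → e ≤ ε₀ →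
      Continuous (fun θ => R θ (r θ) e) := by
    intro r hrc e he0 he
    exact hRcont.comp_continuous (f := fun θ => (θ, r θ, e)) (by fun_prop)
      (fun θ => ⟨Set.mem_univ _, Set.mem_univ _, he0, he⟩)
  have hcontg : ∀ (r : ℝ → ℝ), Continuous r → Continuous (fun θ => cbrt ((r θ)^2 - 1)) := by
    intro r hrc
    exact hcc.comp (by fun_prop)
  have hcontF : ∀ (r : ℝ → ℝ), Continuous r → ∀ e : ℝ, 0 ≤ e → e ≤ ε₀ →
      Continuous (fun θ => F θ (r θ) e) := by
    intro r hrc e he0 he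
    have hR := hcontR r hrc e he0 he
    have hg := hcontg r hrc
    have heq : (fun θ => F θ (r θ) e) = fun θ =>
        (∑ i ∈ Finset.Icc 1 m, e^(i-1) * (r θ)^(i+1) * cos θ^(i-1) * sin θ)
        + e^m * (r θ * (((r θ)^(m+1) * cos θ^m + cbrt ((r θ)^2 - 1) * sin θ) * sin θ))
        + e^(m+1) * R θ (r θ) e := funext fun θ => hF θ (r θ) e
    rw [heq]
    apply Continuous.add
    apply Continuous.add
    · apply continuous_finset_sum
      intro i _
      fun_prop
    · fun_prop
    · exact continuous_const.mul hR
  -- crude integral bounds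
  have habs2π : |2*π - 0| = 2*π := by rw [sub_zero]; exact abs_of_pos hπ
  have hcrude : ∀ (r : ℝ → ℝ), (∀ θ, r θ ∈ Set.Icc (1-α) (1+α)) → (a b : ℕ) →
      |∫ θ in (0:ℝ)..(2*π), cos θ^a * sin θ * r θ^b| ≤ 2^b * (2*π) := by
    intro r hr a b
    have h := intervalIntegral.norm_integral_le_of_norm_le_const
      (C := 2^b) (f := fun θ => cos θ^a * sin θ * r θ^b) (a := 0) (b := 2*π) ?_
    · rw [Real.norm_eq_abs, habs2π] at h
      exact h
    · intro x _
      rw [Real.norm_eq_abs, abs_mul, abs_mul, abs_pow, abs_pow]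
      have h1 : |cos x| ^ a ≤ 1 := pow_le_one₀ (abs_nonneg _) (abs_cos_le_one x)
      have h3 : |r x| ^ b ≤ 2^b := pow_le_pow_left₀ (abs_nonneg _) (hxb _ (hr x)).1 b
      calc |cos x|^a * |sin x| * |r x|^b ≤ 1 * 1 * 2^b := by
            gcongr <;> first | exact h1 | exact abs_sin_le_one x | exact h3
        _ = 2^b := by ring
  have hcrudeS : ∀ (r : ℝ → ℝ), (∀ θ, r θ ∈ Set.Icc (1-α) (1+α)) → (a b : ℕ) →
      |∫ θ in (0:ℝ)..(2*π), r θ^(b+1) * cbrt ((r θ)^2 - 1) * (sin θ * sin θ * cos θ^a)|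
        ≤ 2^(b+1) * 2 * (2*π) := by
    intro r hr a b
    have h := intervalIntegral.norm_integral_le_of_norm_le_const
      (C := 2^(b+1) * 2)
      (f := fun θ => r θ^(b+1) * cbrt ((r θ)^2 - 1) * (sin θ * sin θ * cos θ^a))
      (a := 0) (b := 2*π) ?_
    · rw [Real.norm_eq_abs, habs2π] at h
      exact h
    · intro x _
      rw [Real.norm_eq_abs, abs_mul, abs_mul, abs_mul, abs_mul, abs_pow, abs_pow]
      have h3 : |r x| ^ (b+1) ≤ 2^(b+1) := pow_le_pow_left₀ (abs_nonneg _) (hxb _ (hr x)).1 _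
      have hg : |cbrt ((r x)^2 - 1)| ≤ 2 := (hxb _ (hr x)).2
      have h1 : |cos x| ^ a ≤ 1 := pow_le_one₀ (abs_nonneg _) (abs_cos_le_one x)
      calc |r x|^(b+1) * |cbrt ((r x)^2-1)| * (|sin x| * |sin x| * |cos x|^a)
          ≤ 2^(b+1) * 2 * (1 * 1 * 1) := by
            gcongr <;> first | exact h3 | exact hg | exact abs_sin_le_one x | exact h1
        _ = 2^(b+1) * 2 := by ring
  have hcrudeR : ∀ (r : ℝ → ℝ), (∀ θ, r θ ∈ Set.Icc (1-α) (1+α)) → ∀ e : ℝ, 0 ≤ e → e ≤ ε₀ →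
      ∀ (a b : ℕ),
      |∫ θ in (0:ℝ)..(2*π), cos θ^a * r θ^b * R θ (r θ) e| ≤ 2^b * MR * (2*π) := by
    intro r hr e he0 heε a b
    have h := intervalIntegral.norm_integral_le_of_norm_le_const
      (C := 2^b * MR) (f := fun θ => cos θ^a * r θ^b * R θ (r θ) e) (a := 0) (b := 2*π) ?_
    · rw [Real.norm_eq_abs, habs2π] at h
      exact h
    · intro x _
      rw [Real.norm_eq_abs, abs_mul, abs_mul, abs_pow, abs_pow]
      have h1 : |cos x| ^ a ≤ 1 := pow_le_one₀ (abs_nonneg _) (abs_cos_le_one x)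
      have h3 : |r x| ^ b ≤ 2^b := pow_le_pow_left₀ (abs_nonneg _) (hxb _ (hr x)).1 b
      have hR := hMRb x (r x) e (hr x) ⟨he0, heε⟩
      calc |cos x|^a * |r x|^b * |R x (r x) e| ≤ 1 * 2^b * MR := by
            gcongr <;> first | exact h1 | exact h3 | exact hR
        _ = 2^b * MR := by ring
  -- expansion of the basic integrals
  have hIexp : ∀ (e : ℝ) (r : ℝ → ℝ), 0 ≤ e → e ≤ ε₀ → Continuous r → ∀ a b : ℕ,
      (∫ θ in (0:ℝ)..(2*π), cos θ^a * r θ^b * F θ (r θ) e)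
      = (∑ i ∈ Finset.Icc 1 m,
          e^(i-1) * ∫ θ in (0:ℝ)..(2*π), cos θ^(a+i-1) * sin θ * r θ^(b+i+1))
      + e^m * (∫ θ in (0:ℝ)..(2*π), cos θ^(a+m) * sin θ * r θ^(b+m+2))
      + e^m * (∫ θ in (0:ℝ)..(2*π), r θ^(b+1) * cbrt ((r θ)^2 - 1) * (sin θ * sin θ * cos θ^a))
      + e^(m+1) * ∫ θ in (0:ℝ)..(2*π), cos θ^a * r θ^b * R θ (r θ) e := by
    intro e r he0 heε hrc a b
    have hg := hcontg r hrc
    have hRC := hcontR r hrc e he0 heε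
    have c1 : Continuous fun θ =>
        ∑ i ∈ Finset.Icc 1 m, e^(i-1) * (cos θ^(a+i-1) * sin θ * r θ^(b+i+1)) := by
      apply continuous_finset_sum
      intro i _
      fun_prop
    have c2 : Continuous fun θ => e^m * (cos θ^(a+m) * sin θ * r θ^(b+m+2)) := by fun_prop
    have c3 : Continuous fun θ =>
        e^m * (r θ^(b+1) * cbrt ((r θ)^2 - 1) * (sin θ * sin θ * cos θ^a)) := by fun_prop
    have c4 : Continuous fun θ => e^(m+1) * (cos θ^a * r θ^b * R θ (r θ) e) :=
      continuous_const.mul ((by fun_prop : Continuous fun θ => cos θ^a * r θ^b).mul hRC)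
    have h1 : Set.EqOn (fun θ => cos θ^a * r θ^b * F θ (r θ) e)
        (fun θ => ((∑ i ∈ Finset.Icc 1 m, e^(i-1) * (cos θ^(a+i-1) * sin θ * r θ^(b+i+1)))
          + e^m * (cos θ^(a+m) * sin θ * r θ^(b+m+2))
          + e^m * (r θ^(b+1) * cbrt ((r θ)^2 - 1) * (sin θ * sin θ * cos θ^a))
          + e^(m+1) * (cos θ^a * r θ^b * R θ (r θ) e))) (Set.uIcc 0 (2*π)) :=
      fun θ _ => Fexp m cbrt R F hF a b θ (r θ) e
    rw [intervalIntegral.integral_congr h1]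
    rw [intervalIntegral.integral_add (by exact ((c1.add c2).add c3).intervalIntegrable _ _)
        (c4.intervalIntegrable _ _),
      intervalIntegral.integral_add (by exact (c1.add c2).intervalIntegrable _ _)
        (c3.intervalIntegrable _ _),
      intervalIntegral.integral_add (c1.intervalIntegrable _ _) (c2.intervalIntegrable _ _)]
    rw [intervalIntegral.integral_finset_sum
        (fun i _ => ((by fun_prop : Continuous fun θ =>
          e^(i-1) * (cos θ^(a+i-1) * sin θ * r θ^(b+i+1))).intervalIntegrable _ _))]
    rw [intervalIntegral.integral_const_mul, intervalIntegral.integral_const_mul,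
      intervalIntegral.integral_const_mul]
    congr 3
    · exact Finset.sum_congr rfl fun i _ => intervalIntegral.integral_const_mul _ _
  -- the key inductive estimate
  have hA : ∀ d : ℕ, d ≤ m + 1 → ∀ p q : ℕ, ∃ C : ℝ, 0 < C ∧
      ∀ (e l : ℝ) (r : ℝ → ℝ), 0 < e → e ≤ 1 → e ≤ ε₀ → 0 < l → l ≤ 1 →
        Function.Periodic r (2*π) → (∀ θ, HasDerivAt r (e * l * F θ (r θ) e) θ) →
        (∀ θ, r θ ∈ Set.Icc (1-α) (1+α)) →
        |∫ θ in (0:ℝ)..(2*π), cos θ^p * sin θ * r θ^q| ≤ C * e^d := by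
    intro d
    induction d with
    | zero =>
      intro _ p q
      refine ⟨2^q * (2*π) + 1, by positivity, ?_⟩
      intro e l r he0 he1 heε hl0 hl1 hper hders hr
      rw [pow_zero, mul_one]
      have := hcrude r hr p q
      linarith
    | succ d IH =>
      intro hdm p q
      have hdm' : d ≤ m + 1 := by omega
      choose Cc hCc0 hCcb using fun (p' q' : ℕ) => IH hdm' p' q'
      rcases q with _ | n
      · refine ⟨1, one_pos, ?_⟩
        intro e l r he0 he1 heε hl0 hl1 hper hders hr
        have h0 : (∫ θ in (0:ℝ)..(2*π), cos θ^p * sin θ * r θ^0) = 0 := by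
          have heq : Set.EqOn (fun θ => cos θ^p * sin θ * r θ^0)
              (fun θ => cos θ^p * sin θ) (Set.uIcc 0 (2*π)) := fun θ _ => by simp
          rw [intervalIntegral.integral_congr heq, intT_zero]
        rw [h0, abs_zero]
        positivity
      · set CS : ℝ := ∑ i ∈ Finset.Icc 1 m, Cc (p+1+i-1) (n+i+1) with hCS
        have hCS0 : 0 ≤ CS := Finset.sum_nonneg fun i _ => (hCc0 _ _).le
        set BB : ℝ := 2^(n+m+2) * (2*π) + 2^(n+1)*2*(2*π) + 2^n * MR * (2*π) with hBB
        have hBB0 : 0 ≤ BB := by positivity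
        refine ⟨((n:ℝ)+1) * (CS + BB) + 1, by positivity, ?_⟩
        intro e l r he0 he1 heε hl0 hl1 hper hders hr
        have hrc : Continuous r := by
          rw [continuous_iff_continuousAt]
          exact fun θ => (hders θ).differentiableAt.continuousAt
        have hFC := hcontF r hrc e he0.le heε
        have hG : Continuous fun θ => e * l * F θ (r θ) e := continuous_const.mul hFC
        have hibp := IBP r (fun θ => e * l * F θ (r θ) e) hper hders hG p n
        have hpull : (∫ θ in (0:ℝ)..(2*π), cos θ^(p+1) * r θ^n * (e * l * F θ (r θ) e))
            = (e*l) * ∫ θ in (0:ℝ)..(2*π), cos θ^(p+1) * r θ^n * F θ (r θ) e := by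
          rw [← intervalIntegral.integral_const_mul]
          apply intervalIntegral.integral_congr
          intro θ _
          ring
        rw [hpull] at hibp
        -- bound the expanded integral
        have hWexp := hIexp e r he0.le heε hrc (p+1) n
        have hpowm : e^m ≤ e^d := pow_le_pow_of_le_one he0.le he1 (by omega)
        have hpowm1 : e^(m+1) ≤ e^d := pow_le_pow_of_le_one he0.le he1 (by omega)
        have hed0 : (0:ℝ) ≤ e^d := by positivity
        have hWb : |∫ θ in (0:ℝ)..(2*π), cos θ^(p+1) * r θ^n * F θ (r θ) e|
            ≤ (CS + BB) * e^d := by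
          rw [hWexp]
          have bb1 := hcrude r hr (p+1+m) (n+m+2)
          have bb2 := hcrudeS r hr (p+1) n
          have bb3 := hcrudeR r hr e he0.le heε (p+1) n
          have hsum : |∑ i ∈ Finset.Icc 1 m,
              e^(i-1) * ∫ θ in (0:ℝ)..(2*π), cos θ^(p+1+i-1) * sin θ * r θ^(n+i+1)|
              ≤ CS * e^d := by
            calc |∑ i ∈ Finset.Icc 1 m,
                e^(i-1) * ∫ θ in (0:ℝ)..(2*π), cos θ^(p+1+i-1) * sin θ * r θ^(n+i+1)|
                ≤ ∑ i ∈ Finset.Icc 1 m,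
                  |e^(i-1) * ∫ θ in (0:ℝ)..(2*π), cos θ^(p+1+i-1) * sin θ * r θ^(n+i+1)| :=
                  Finset.abs_sum_le_sum_abs _ _
              _ ≤ ∑ i ∈ Finset.Icc 1 m, Cc (p+1+i-1) (n+i+1) * e^d := by
                  apply Finset.sum_le_sum
                  intro i _
                  rw [abs_mul]
                  have h2 := hCcb (p+1+i-1) (n+i+1) e l r he0 he1 heε hl0 hl1 hper hders hr
                  have h3 : |e^(i-1)| ≤ 1 :=
                    (abs_pow e (i-1)) ▸ pow_le_one₀ (abs_nonneg _) (abs_le.mpr ⟨by linarith, he1⟩)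
                  calc |e^(i-1)| * |∫ θ in (0:ℝ)..(2*π), cos θ^(p+1+i-1) * sin θ * r θ^(n+i+1)|
                      ≤ 1 * (Cc (p+1+i-1) (n+i+1) * e^d) :=
                        mul_le_mul h3 h2 (abs_nonneg _) zero_le_one
                    _ = Cc (p+1+i-1) (n+i+1) * e^d := one_mul _
              _ = CS * e^d := by rw [hCS, Finset.sum_mul]
          have h4 : |e^m * (∫ θ in (0:ℝ)..(2*π), cos θ^(p+1+m) * sin θ * r θ^(n+m+2))|
              ≤ e^d * (2^(n+m+2) * (2*π)) := by
            rw [abs_mul, abs_of_nonneg (by positivity : (0:ℝ) ≤ e^m)]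
            exact mul_le_mul hpowm bb1 (abs_nonneg _) hed0
          have h5 : |e^m * (∫ θ in (0:ℝ)..(2*π),
              r θ^(n+1) * cbrt ((r θ)^2 - 1) * (sin θ * sin θ * cos θ^(p+1)))|
              ≤ e^d * (2^(n+1)*2*(2*π)) := by
            rw [abs_mul, abs_of_nonneg (by positivity : (0:ℝ) ≤ e^m)]
            exact mul_le_mul hpowm bb2 (abs_nonneg _) hed0
          have h6 : |e^(m+1) * ∫ θ in (0:ℝ)..(2*π), cos θ^(p+1) * r θ^n * R θ (r θ) e|
              ≤ e^d * (2^n * MR * (2*π)) := by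
            rw [abs_mul, abs_of_nonneg (by positivity : (0:ℝ) ≤ e^(m+1))]
            exact mul_le_mul hpowm1 bb3 (abs_nonneg _) hed0
          calc |(∑ i ∈ Finset.Icc 1 m,
                e^(i-1) * ∫ θ in (0:ℝ)..(2*π), cos θ^(p+1+i-1) * sin θ * r θ^(n+i+1))
              + e^m * (∫ θ in (0:ℝ)..(2*π), cos θ^(p+1+m) * sin θ * r θ^(n+m+2))
              + e^m * (∫ θ in (0:ℝ)..(2*π),
                  r θ^(n+1) * cbrt ((r θ)^2 - 1) * (sin θ * sin θ * cos θ^(p+1)))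
              + e^(m+1) * ∫ θ in (0:ℝ)..(2*π), cos θ^(p+1) * r θ^n * R θ (r θ) e|
              ≤ |(∑ i ∈ Finset.Icc 1 m,
                e^(i-1) * ∫ θ in (0:ℝ)..(2*π), cos θ^(p+1+i-1) * sin θ * r θ^(n+i+1))
              + e^m * (∫ θ in (0:ℝ)..(2*π), cos θ^(p+1+m) * sin θ * r θ^(n+m+2))
              + e^m * (∫ θ in (0:ℝ)..(2*π),
                  r θ^(n+1) * cbrt ((r θ)^2 - 1) * (sin θ * sin θ * cos θ^(p+1)))|
              + |e^(m+1) * ∫ θ in (0:ℝ)..(2*π), cos θ^(p+1) * r θ^n * R θ (r θ) e| :=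
                abs_add_le _ _
            _ ≤ |(∑ i ∈ Finset.Icc 1 m,
                e^(i-1) * ∫ θ in (0:ℝ)..(2*π), cos θ^(p+1+i-1) * sin θ * r θ^(n+i+1))
              + e^m * (∫ θ in (0:ℝ)..(2*π), cos θ^(p+1+m) * sin θ * r θ^(n+m+2))|
              + |e^m * (∫ θ in (0:ℝ)..(2*π),
                  r θ^(n+1) * cbrt ((r θ)^2 - 1) * (sin θ * sin θ * cos θ^(p+1)))|
              + |e^(m+1) * ∫ θ in (0:ℝ)..(2*π), cos θ^(p+1) * r θ^n * R θ (r θ) e| := by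
                gcongr
                exact abs_add_le _ _
            _ ≤ |∑ i ∈ Finset.Icc 1 m,
                e^(i-1) * ∫ θ in (0:ℝ)..(2*π), cos θ^(p+1+i-1) * sin θ * r θ^(n+i+1)|
              + |e^m * (∫ θ in (0:ℝ)..(2*π), cos θ^(p+1+m) * sin θ * r θ^(n+m+2))|
              + |e^m * (∫ θ in (0:ℝ)..(2*π),
                  r θ^(n+1) * cbrt ((r θ)^2 - 1) * (sin θ * sin θ * cos θ^(p+1)))|
              + |e^(m+1) * ∫ θ in (0:ℝ)..(2*π), cos θ^(p+1) * r θ^n * R θ (r θ) e| := by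
                gcongr
                exact abs_add_le _ _
            _ ≤ CS * e^d + e^d * (2^(n+m+2) * (2*π)) + e^d * (2^(n+1)*2*(2*π))
                + e^d * (2^n * MR * (2*π)) := by
                gcongr <;> first | exact hsum | exact h4 | exact h5 | exact h6
            _ = (CS + BB) * e^d := by rw [hBB]; ring
        -- conclude
        have hTb : |∫ θ in (0:ℝ)..(2*π), cos θ^p * sin θ * r θ^(n+1)|
            ≤ ((n:ℝ)+1) * e * |∫ θ in (0:ℝ)..(2*π), cos θ^(p+1) * r θ^n * F θ (r θ) e| := by
          have h1 : |∫ θ in (0:ℝ)..(2*π), cos θ^p * sin θ * r θ^(n+1)|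
              ≤ ((p:ℝ)+1) * |∫ θ in (0:ℝ)..(2*π), cos θ^p * sin θ * r θ^(n+1)| := by
            nlinarith [mul_nonneg (Nat.cast_nonneg p : (0:ℝ) ≤ (p:ℝ))
              (abs_nonneg (∫ θ in (0:ℝ)..(2*π), cos θ^p * sin θ * r θ^(n+1)))]
          have h2 : ((p:ℝ)+1) * |∫ θ in (0:ℝ)..(2*π), cos θ^p * sin θ * r θ^(n+1)|
              = |((p:ℝ)+1) * ∫ θ in (0:ℝ)..(2*π), cos θ^p * sin θ * r θ^(n+1)| := by
            rw [abs_mul, abs_of_pos (by positivity : (0:ℝ) < (p:ℝ)+1)]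
          rw [h2, hibp] at h1
          calc |∫ θ in (0:ℝ)..(2*π), cos θ^p * sin θ * r θ^(n+1)|
              ≤ |((n:ℝ)+1) * ((e*l) * ∫ θ in (0:ℝ)..(2*π), cos θ^(p+1) * r θ^n * F θ (r θ) e)|
                := h1
            _ = ((n:ℝ)+1) * e * (l * |∫ θ in (0:ℝ)..(2*π), cos θ^(p+1) * r θ^n * F θ (r θ) e|)
                := by
                rw [abs_mul, abs_mul, abs_mul, abs_of_pos (by positivity : (0:ℝ) < (n:ℝ)+1),
                  abs_of_pos he0, abs_of_pos hl0]
                ring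
            _ ≤ ((n:ℝ)+1) * e * (1 * |∫ θ in (0:ℝ)..(2*π), cos θ^(p+1) * r θ^n * F θ (r θ) e|)
                := by gcongr
            _ = ((n:ℝ)+1) * e * |∫ θ in (0:ℝ)..(2*π), cos θ^(p+1) * r θ^n * F θ (r θ) e| := by
                ring
        calc |∫ θ in (0:ℝ)..(2*π), cos θ^p * sin θ * r θ^(n+1)|
            ≤ ((n:ℝ)+1) * e * |∫ θ in (0:ℝ)..(2*π), cos θ^(p+1) * r θ^n * F θ (r θ) e| := hTb
          _ ≤ ((n:ℝ)+1) * e * ((CS + BB) * e^d) := by gcongr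
          _ = (((n:ℝ)+1) * (CS + BB)) * e^(d+1) := by ring
          _ ≤ (((n:ℝ)+1) * (CS + BB) + 1) * e^(d+1) := by
              have : (0:ℝ) ≤ e^(d+1) := by positivity
              nlinarith
  -- constants for the final estimate
  have hfin : ∀ i : ℕ, ∃ C : ℝ, 0 < C ∧ ∀ (e l : ℝ) (r : ℝ → ℝ), 0 < e → e ≤ 1 → e ≤ ε₀ →
      0 < l → l ≤ 1 → Function.Periodic r (2*π) →
      (∀ θ, HasDerivAt r (e * l * F θ (r θ) e) θ) →
      (∀ θ, r θ ∈ Set.Icc (1-α) (1+α)) → 1 ≤ i → i ≤ m →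
      e^(i-1) * |∫ θ in (0:ℝ)..(2*π), cos θ^(0+i-1) * sin θ * r θ^(0+i+1)| ≤ C * e^(m+1) := by
    intro i
    by_cases hi : 1 ≤ i ∧ i ≤ m
    · obtain ⟨C, hC0, hCb⟩ := hA (m+2-i) (by omega) (0+i-1) (0+i+1)
      refine ⟨C, hC0, ?_⟩
      intro e l r he0 he1 heε hl0 hl1 hper hders hr h1i him
      have hb := hCb e l r he0 he1 heε hl0 hl1 hper hders hr
      have hpp : e^(i-1) * e^(m+2-i) = e^(m+1) := by
        rw [← pow_add]
        congr 1
        omega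
      calc e^(i-1) * |∫ θ in (0:ℝ)..(2*π), cos θ^(0+i-1) * sin θ * r θ^(0+i+1)|
          ≤ e^(i-1) * (C * e^(m+2-i)) := by
            apply mul_le_mul_of_nonneg_left hb (by positivity)
        _ = C * (e^(i-1) * e^(m+2-i)) := by ring
        _ = C * e^(m+1) := by rw [hpp]
    · refine ⟨1, one_pos, ?_⟩
      intro e l r he0 he1 heε hl0 hl1 hper hders hr h1i him
      exact absurd ⟨h1i, him⟩ hi
  choose Cfin hCfin0 hCfinb using hfin
  obtain ⟨Cm2, hCm20, hCm2b⟩ := hA 1 (by omega) (0+m) (0+m+2)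
  set Ctot : ℝ := (∑ i ∈ Finset.Icc 1 m, Cfin i) + Cm2 + (2^0 * MR * (2*π)) + 1 with hCtot
  have hsumCfin : (0:ℝ) ≤ ∑ i ∈ Finset.Icc 1 m, Cfin i :=
    Finset.sum_nonneg fun i _ => (hCfin0 i).le
  have hCtot0 : 0 < Ctot := by
    have h9 : (0:ℝ) ≤ 2^0 * MR * (2*π) := by positivity
    rw [hCtot]
    linarith
  -- main estimate : the signal integral is O(e)
  have hSb : ∀ (e l : ℝ) (r : ℝ → ℝ), 0 < e → e ≤ 1 → e ≤ ε₀ → 0 < l → l ≤ 1 →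
      Function.Periodic r (2*π) → (∀ θ, HasDerivAt r (e * l * F θ (r θ) e) θ) →
      (∀ θ, r θ ∈ Set.Icc (1-α) (1+α)) →
      |∫ θ in (0:ℝ)..(2*π), r θ^(0+1) * cbrt ((r θ)^2 - 1) * (sin θ * sin θ * cos θ^0)|
        ≤ Ctot * e := by
    intro e l r he0 he1 heε hl0 hl1 hper hders hr
    have hrc : Continuous r := by
      rw [continuous_iff_continuousAt]
      exact fun θ => (hders θ).differentiableAt.continuousAt
    have hFC := hcontF r hrc e he0.le heε
    have hz : (∫ θ in (0:ℝ)..(2*π), e * l * F θ (r θ) e) = 0 := by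
      rw [intervalIntegral.integral_eq_sub_of_hasDerivAt (fun θ _ => hders θ)
        ((continuous_const.mul hFC).intervalIntegrable _ _)]
      have hr0 : r (2*π) = r 0 := by simpa using hper 0
      rw [hr0, sub_self]
    have hzF : (∫ θ in (0:ℝ)..(2*π), cos θ^0 * r θ^0 * F θ (r θ) e) = 0 := by
      have hpull : (∫ θ in (0:ℝ)..(2*π), e * l * F θ (r θ) e)
          = (e*l) * ∫ θ in (0:ℝ)..(2*π), cos θ^0 * r θ^0 * F θ (r θ) e := by
        rw [← intervalIntegral.integral_const_mul]
        apply intervalIntegral.integral_congr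
        intro θ _
        simp
      rw [hpull] at hz
      rcases mul_eq_zero.mp hz with h | h
      · exact absurd h (by positivity)
      · exact h
    have hexp := hIexp e r he0.le heε hrc 0 0
    rw [hzF] at hexp
    have hrearr : e^m * (∫ θ in (0:ℝ)..(2*π),
          r θ^(0+1) * cbrt ((r θ)^2 - 1) * (sin θ * sin θ * cos θ^0))
        = -((∑ i ∈ Finset.Icc 1 m,
            e^(i-1) * ∫ θ in (0:ℝ)..(2*π), cos θ^(0+i-1) * sin θ * r θ^(0+i+1))
          + e^m * (∫ θ in (0:ℝ)..(2*π), cos θ^(0+m) * sin θ * r θ^(0+m+2))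
          + e^(m+1) * ∫ θ in (0:ℝ)..(2*π), cos θ^0 * r θ^0 * R θ (r θ) e) := by
      linarith [hexp]
    have hsum : |∑ i ∈ Finset.Icc 1 m,
        e^(i-1) * ∫ θ in (0:ℝ)..(2*π), cos θ^(0+i-1) * sin θ * r θ^(0+i+1)|
        ≤ (∑ i ∈ Finset.Icc 1 m, Cfin i) * e^(m+1) := by
      calc |∑ i ∈ Finset.Icc 1 m,
          e^(i-1) * ∫ θ in (0:ℝ)..(2*π), cos θ^(0+i-1) * sin θ * r θ^(0+i+1)|
          ≤ ∑ i ∈ Finset.Icc 1 m,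
            |e^(i-1) * ∫ θ in (0:ℝ)..(2*π), cos θ^(0+i-1) * sin θ * r θ^(0+i+1)| :=
            Finset.abs_sum_le_sum_abs _ _
        _ ≤ ∑ i ∈ Finset.Icc 1 m, Cfin i * e^(m+1) := by
            apply Finset.sum_le_sum
            intro i hi
            obtain ⟨h1i, him⟩ := Finset.mem_Icc.mp hi
            have := hCfinb i e l r he0 he1 heε hl0 hl1 hper hders hr h1i him
            rw [abs_mul, abs_of_nonneg (by positivity : (0:ℝ) ≤ e^(i-1))] at *
            exact this
        _ = (∑ i ∈ Finset.Icc 1 m, Cfin i) * e^(m+1) := by rw [Finset.sum_mul]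
    have hT' : e^m * |∫ θ in (0:ℝ)..(2*π), cos θ^(0+m) * sin θ * r θ^(0+m+2)|
        ≤ Cm2 * e^(m+1) := by
      have := hCm2b e l r he0 he1 heε hl0 hl1 hper hders hr
      calc e^m * |∫ θ in (0:ℝ)..(2*π), cos θ^(0+m) * sin θ * r θ^(0+m+2)|
          ≤ e^m * (Cm2 * e^1) := mul_le_mul_of_nonneg_left this (by positivity)
        _ = Cm2 * e^(m+1) := by rw [pow_succ]; ring
    have hV : e^(m+1) * |∫ θ in (0:ℝ)..(2*π), cos θ^0 * r θ^0 * R θ (r θ) e|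
        ≤ (2^0 * MR * (2*π)) * e^(m+1) := by
      have := hcrudeR r hr e he0.le heε 0 0
      calc e^(m+1) * |∫ θ in (0:ℝ)..(2*π), cos θ^0 * r θ^0 * R θ (r θ) e|
          ≤ e^(m+1) * (2^0 * MR * (2*π)) := mul_le_mul_of_nonneg_left this (by positivity)
        _ = (2^0 * MR * (2*π)) * e^(m+1) := by ring
    have hcore : e^m * |∫ θ in (0:ℝ)..(2*π),
        r θ^(0+1) * cbrt ((r θ)^2 - 1) * (sin θ * sin θ * cos θ^0)| ≤ Ctot * e^(m+1) := by
      have hem : (0:ℝ) ≤ e^m := by positivity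
      have habs : e^m * |∫ θ in (0:ℝ)..(2*π),
          r θ^(0+1) * cbrt ((r θ)^2 - 1) * (sin θ * sin θ * cos θ^0)|
          = |e^m * (∫ θ in (0:ℝ)..(2*π),
            r θ^(0+1) * cbrt ((r θ)^2 - 1) * (sin θ * sin θ * cos θ^0))| := by
        rw [abs_mul, abs_of_nonneg hem]
      rw [habs, hrearr, abs_neg]
      have hstep : ∀ x y z : ℝ, |x + y + z| ≤ |x| + |y| + |z| := fun x y z =>
        le_trans (abs_add_le _ _) (by linarith [abs_add_le x y])
      calc |(∑ i ∈ Finset.Icc 1 m,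
            e^(i-1) * ∫ θ in (0:ℝ)..(2*π), cos θ^(0+i-1) * sin θ * r θ^(0+i+1))
          + e^m * (∫ θ in (0:ℝ)..(2*π), cos θ^(0+m) * sin θ * r θ^(0+m+2))
          + e^(m+1) * ∫ θ in (0:ℝ)..(2*π), cos θ^0 * r θ^0 * R θ (r θ) e|
          ≤ |∑ i ∈ Finset.Icc 1 m,
            e^(i-1) * ∫ θ in (0:ℝ)..(2*π), cos θ^(0+i-1) * sin θ * r θ^(0+i+1)|
          + |e^m * (∫ θ in (0:ℝ)..(2*π), cos θ^(0+m) * sin θ * r θ^(0+m+2))|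
          + |e^(m+1) * ∫ θ in (0:ℝ)..(2*π), cos θ^0 * r θ^0 * R θ (r θ) e| := hstep _ _ _
        _ ≤ (∑ i ∈ Finset.Icc 1 m, Cfin i) * e^(m+1) + Cm2 * e^(m+1)
            + (2^0 * MR * (2*π)) * e^(m+1) := by
            have e1 : |e^m * (∫ θ in (0:ℝ)..(2*π), cos θ^(0+m) * sin θ * r θ^(0+m+2))|
                = e^m * |∫ θ in (0:ℝ)..(2*π), cos θ^(0+m) * sin θ * r θ^(0+m+2)| := by
              rw [abs_mul, abs_of_nonneg hem]
            have e2 : |e^(m+1) * ∫ θ in (0:ℝ)..(2*π), cos θ^0 * r θ^0 * R θ (r θ) e|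
                = e^(m+1) * |∫ θ in (0:ℝ)..(2*π), cos θ^0 * r θ^0 * R θ (r θ) e| := by
              rw [abs_mul, abs_of_nonneg (by positivity : (0:ℝ) ≤ e^(m+1))]
            rw [e1, e2]
            linarith [hsum, hT', hV]
        _ ≤ Ctot * e^(m+1) := by
            have : (0:ℝ) ≤ e^(m+1) := by positivity
            rw [hCtot]
            nlinarith
    have hem : (0:ℝ) < e^m := pow_pos he0 m
    rw [pow_succ] at hcore
    nlinarith [hcore, hem, abs_nonneg (∫ θ in (0:ℝ)..(2*π),
      r θ^(0+1) * cbrt ((r θ)^2 - 1) * (sin θ * sin θ * cos θ^0))]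
  -- choice of ε₁
  have h1α : 0 < 1 - α := by linarith
  set εosc : ℝ := α^2*(1-α)/(16*MF) with hεosc
  set εsig : ℝ := (1-α)*cbrt α/Ctot with hεsig
  have hεosc0 : 0 < εosc := by
    apply div_pos (mul_pos (pow_pos hα0 2) h1α) (by positivity)
  have hεsig0 : 0 < εsig := div_pos (mul_pos h1α hcα) hCtot0
  refine ⟨min ε₀ (min 1 (min εosc εsig)), ⟨lt_min hε₀ (lt_min one_pos (lt_min hεosc0 hεsig0)),
    min_le_left _ _⟩, ?_⟩
  intro l hl e he r hper _hsmooth hders hr θ0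
  obtain ⟨hl0, hl1⟩ := hl
  obtain ⟨he0, he1'⟩ := he
  have heε : e ≤ ε₀ := le_trans he1' (min_le_left _ _)
  have he1 : e ≤ 1 := le_trans he1' (le_trans (min_le_right _ _) (min_le_left _ _))
  have heo : e ≤ εosc := le_trans he1'
    (le_trans (min_le_right _ _) (le_trans (min_le_right _ _) (min_le_left _ _)))
  have hes : e ≤ εsig := le_trans he1'
    (le_trans (min_le_right _ _) (le_trans (min_le_right _ _) (min_le_right _ _)))
  have hrc : Continuous r := by
    rw [continuous_iff_continuousAt]
    exact fun θ => (hders θ).differentiableAt.continuousAt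
  set w : ℝ := α^2*(1-α)/2 with hw
  have hw0 : 0 < w := by
    have : 0 < α^2*(1-α) := mul_pos (pow_pos hα0 2) h1α
    rw [hw]; linarith
  have hwle : w ≤ 1/2 := by
    rw [hw]; nlinarith [sq_nonneg α, sq_nonneg (1-α)]
  -- oscillation bound
  have hosc : ∀ θ, |r θ - r θ0| ≤ w := by
    intro θ
    obtain ⟨y, hy, hry⟩ := hper.exists_mem_Ico hπ θ θ0
    have hry' : r θ = r y := hry
    have hderW : ∀ x ∈ Set.Icc θ0 (θ0 + 2*π),
        HasDerivWithinAt r (e*l*F x (r x) e) (Set.Icc θ0 (θ0+2*π)) x :=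
      fun x _ => (hders x).hasDerivWithinAt
    have hbd : ∀ x ∈ Set.Ico θ0 (θ0 + 2*π), ‖e*l*F x (r x) e‖ ≤ e*MF := by
      intro x _
      rw [Real.norm_eq_abs, abs_mul, abs_mul, abs_of_pos he0, abs_of_pos hl0]
      have hFb := hMFb x (r x) e (hr x) he0.le he1 heε
      have h2 : l * |F x (r x) e| ≤ MF :=
        le_trans (mul_le_of_le_one_left (abs_nonneg _) hl1) hFb
      calc e * l * |F x (r x) e| = e * (l * |F x (r x) e|) := by ring
        _ ≤ e * MF := mul_le_mul_of_nonneg_left h2 he0.le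
    have key := norm_image_sub_le_of_norm_deriv_le_segment' hderW hbd y ⟨hy.1, hy.2.le⟩
    rw [Real.norm_eq_abs] at key
    have h2π8 : 2*π ≤ 8 := by nlinarith [Real.pi_le_four]
    have hyb : y - θ0 ≤ 2*π := by have := hy.2; linarith
    have hEMF : e * MF * (y - θ0) ≤ e * MF * (2*π) :=
      mul_le_mul_of_nonneg_left hyb (by positivity)
    have hlast : e*MF*(2*π) ≤ w := by
      have heo' : e ≤ α^2*(1-α)/(16*MF) := heo
      have hq : e*MF*(2*π) ≤ e*MF*8 := mul_le_mul_of_nonneg_left h2π8 (by positivity)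
      have hq2 : e*MF*8 ≤ (α^2*(1-α)/(16*MF))*MF*8 := by
        have : e*MF ≤ (α^2*(1-α)/(16*MF))*MF :=
          mul_le_mul_of_nonneg_right heo' hMF0.le
        linarith
      have hq3 : (α^2*(1-α)/(16*MF))*MF*8 = w := by
        rw [hw]; field_simp; ring
      calc e*MF*(2*π) ≤ e*MF*8 := hq
        _ ≤ (α^2*(1-α)/(16*MF))*MF*8 := hq2
        _ = w := hq3
    rw [hry']
    linarith [key, hEMF]
  -- main per-solution estimate
  have hSbound := hSb e l r he0 he1 heε hl0 hl1 hper hders hr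
  obtain ⟨hA1, hA2⟩ := hr θ0
  rcases hA1.lt_or_eq with hlt1 | heq1
  · rcases hA2.lt_or_eq with hlt2 | heq2
    · exact ⟨hlt1, hlt2⟩
    · -- upper touch : r θ0 = 1 + α
      exfalso
      have hlow : ∀ θ, 1 + α - w ≤ r θ := by
        intro θ
        have h := (abs_le.mp (hosc θ)).1
        rw [heq2] at h
        linarith
      have hkey : α ≤ (1+α-w)^2 - 1 := by
        rw [hw]
        nlinarith [sq_nonneg (α^2*(1-α)), sq_nonneg α, hα0.le, hα1, pow_pos hα0 2]
      have hg : ∀ θ, cbrt α ≤ cbrt ((r θ)^2 - 1) := by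
        intro θ
        apply hcbrt_le
        have hl1' := hlow θ
        have h2 : 0 ≤ 1 + α - w := by linarith
        have h3 : (1+α-w)^2 ≤ (r θ)^2 := by nlinarith
        linarith
      have hs2 : ∀ θ ∈ Set.Icc (0:ℝ) (2*π), (1-α) * cbrt α * (sin θ)^2
          ≤ r θ^(0+1) * cbrt ((r θ)^2 - 1) * (sin θ * sin θ * cos θ^0) := by
        intro θ _
        have hr1 : 1 - α ≤ r θ := (hr θ).1
        have h1 : (1-α) * cbrt α ≤ r θ * cbrt ((r θ)^2 - 1) :=
          mul_le_mul hr1 (hg θ) hcα.le (by linarith)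
        calc (1-α) * cbrt α * (sin θ)^2
            ≤ (r θ * cbrt ((r θ)^2 - 1)) * (sin θ)^2 :=
              mul_le_mul_of_nonneg_right h1 (sq_nonneg _)
          _ = r θ^(0+1) * cbrt ((r θ)^2 - 1) * (sin θ * sin θ * cos θ^0) := by
              simp [pow_two]
      have hint1 : IntervalIntegrable (fun θ => (1-α) * cbrt α * (sin θ)^2)
          MeasureTheory.volume 0 (2*π) := by
        apply Continuous.intervalIntegrable; fun_prop
      have hint2 : IntervalIntegrable
          (fun θ => r θ^(0+1) * cbrt ((r θ)^2 - 1) * (sin θ * sin θ * cos θ^0))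
          MeasureTheory.volume 0 (2*π) := by
        apply Continuous.intervalIntegrable
        have hgc := hcontg r hrc
        fun_prop
      have hmono := intervalIntegral.integral_mono_on hπ.le hint1 hint2 hs2
      have hval : (∫ θ in (0:ℝ)..(2*π), (1-α) * cbrt α * (sin θ)^2) = (1-α)*cbrt α*π := by
        rw [intervalIntegral.integral_const_mul, integral_sin_sq, Real.sin_two_pi,
          Real.sin_zero, Real.cos_two_pi, Real.cos_zero]
        ring
      rw [hval] at hmono
      have hSpos : (1-α)*cbrt α*π ≤ |∫ θ in (0:ℝ)..(2*π),
          r θ^(0+1) * cbrt ((r θ)^2 - 1) * (sin θ * sin θ * cos θ^0)| :=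
        le_trans hmono (le_abs_self _)
      have hfe : (1-α)*cbrt α*π ≤ Ctot * e := le_trans hSpos hSbound
      have hse : Ctot * e ≤ (1-α)*cbrt α := by
        calc Ctot * e ≤ Ctot * εsig := mul_le_mul_of_nonneg_left hes hCtot0.le
          _ = (1-α)*cbrt α := by rw [hεsig]; field_simp
      nlinarith [Real.pi_gt_three, mul_pos h1α hcα]
  · -- lower touch : 1 - α = r θ0
    exfalso
    have hup : ∀ θ, r θ ≤ 1 - α + w := by
      intro θ
      have h := (abs_le.mp (hosc θ)).2
      rw [← heq1] at h
      linarith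
    have hcneg : cbrt (-α) = -cbrt α := by
      have hcube : (-cbrt α)^3 = -α := by
        rw [Odd.neg_pow (⟨1, by norm_num⟩ : Odd 3), hcbrt]
      have ha1 : cbrt (-α) ≤ -cbrt α := cube_le_cube (by rw [hcbrt, hcube])
      have ha2 : -cbrt α ≤ cbrt (-α) := cube_le_cube (by rw [hcbrt, hcube])
      linarith
    have hkey : (1-α+w)^2 - 1 ≤ -α := by
      rw [hw]
      nlinarith [sq_nonneg (2*α-1), sq_nonneg (α*(1-α)), pow_pos hα0 2, sq_nonneg α,
        mul_pos hα0 h1α, sq_nonneg (α^2*(1-α))]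
    have hg : ∀ θ, cbrt ((r θ)^2 - 1) ≤ -cbrt α := by
      intro θ
      rw [← hcneg]
      apply hcbrt_le
      have hu := hup θ
      have hr1 : 1 - α ≤ r θ := (hr θ).1
      have h3 : (r θ)^2 ≤ (1-α+w)^2 := by nlinarith
      linarith
    have hs2 : ∀ θ ∈ Set.Icc (0:ℝ) (2*π),
        r θ^(0+1) * cbrt ((r θ)^2 - 1) * (sin θ * sin θ * cos θ^0)
        ≤ -((1-α) * cbrt α) * (sin θ)^2 := by
      intro θ _
      have hr1 : 1 - α ≤ r θ := (hr θ).1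
      have hgneg : cbrt ((r θ)^2 - 1) ≤ 0 := le_trans (hg θ) (by linarith)
      have h1 : r θ * cbrt ((r θ)^2 - 1) ≤ (1-α) * cbrt ((r θ)^2 - 1) :=
        mul_le_mul_of_nonpos_right hr1 hgneg
      have h2 : (1-α) * cbrt ((r θ)^2 - 1) ≤ (1-α) * (-cbrt α) :=
        mul_le_mul_of_nonneg_left (hg θ) h1α.le
      calc r θ^(0+1) * cbrt ((r θ)^2 - 1) * (sin θ * sin θ * cos θ^0)
          = (r θ * cbrt ((r θ)^2 - 1)) * (sin θ)^2 := by simp [pow_two]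
        _ ≤ ((1-α) * (-cbrt α)) * (sin θ)^2 :=
            mul_le_mul_of_nonneg_right (le_trans h1 h2) (sq_nonneg _)
        _ = -((1-α) * cbrt α) * (sin θ)^2 := by ring
    have hint1 : IntervalIntegrable (fun θ => -((1-α) * cbrt α) * (sin θ)^2)
        MeasureTheory.volume 0 (2*π) := by
      apply Continuous.intervalIntegrable; fun_prop
    have hint2 : IntervalIntegrable
        (fun θ => r θ^(0+1) * cbrt ((r θ)^2 - 1) * (sin θ * sin θ * cos θ^0))
        MeasureTheory.volume 0 (2*π) := by
      apply Continuous.intervalIntegrable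
      have hgc := hcontg r hrc
      fun_prop
    have hmono := intervalIntegral.integral_mono_on hπ.le hint2 hint1 hs2
    have hval : (∫ θ in (0:ℝ)..(2*π), -((1-α) * cbrt α) * (sin θ)^2)
        = -((1-α)*cbrt α*π) := by
      rw [intervalIntegral.integral_const_mul, integral_sin_sq, Real.sin_two_pi,
        Real.sin_zero, Real.cos_two_pi, Real.cos_zero]
      ring
    rw [hval] at hmono
    have hSpos : (1-α)*cbrt α*π ≤ |∫ θ in (0:ℝ)..(2*π),
        r θ^(0+1) * cbrt ((r θ)^2 - 1) * (sin θ * sin θ * cos θ^0)| := by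
      apply le_abs.mpr
      right
      linarith
    have hfe : (1-α)*cbrt α*π ≤ Ctot * e := le_trans hSpos hSbound
    have hse : Ctot * e ≤ (1-α)*cbrt α := by
      calc Ctot * e ≤ Ctot * εsig := mul_le_mul_of_nonneg_left hes hCtot0.le
        _ = (1-α)*cbrt α := by rw [hεsig]; field_simp
    nlinarith [Real.pi_gt_three, mul_pos h1α hcα]
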